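/- For two probability measures μ and ν on ℝ with finite second moments, the squared 2-Wasserstein distance between μ and ν equals the squared L²(0,1) norm of the difference of their quantile functions: W₂²(μ,ν) = ∫₀¹ |F_μ⁻¹(t) − F_ν⁻¹(t)|² dt. -/

import Mathlib

open MeasureTheory ProbabilityTheory Real Set
open scoped ENNReal NNReal

noncomputable section

/-- Quantile (generalized inverse CDF) of a measure on `ℝ`. -/
def quantile (μ : Measure ℝ) (t : ℝ) : ℝ :=
  sInf {x : ℝ | ENNReal.ofReal t ≤ μ (Set.Iic x)}

/-- Squared 2-Wasserstein distance on `ℝ`, via the 1D quantile-function formula. -/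
def W2sq (μ ν : Measure ℝ) : ℝ :=
  ∫ t in Set.Ioo (0:ℝ) 1, (quantile μ t - quantile ν t)^2

/-- Empirical measure of `n` real points. -/
def empMeasure {n : ℕ} (X : Fin n → ℝ) : Measure ℝ :=
  ((n : ℝ≥0∞))⁻¹ • ∑ i, Measure.dirac (X i)

/-- `k`-th order statistic (`k : Fin n`, so `ordStat X k` is the `(k+1)`-th smallest). -/
def ordStat {n : ℕ} (X : Fin n → ℝ) (k : Fin n) : ℝ :=
  quantile (empMeasure X) (((k : ℕ) + 1 : ℝ) / n)

/-- Continuous uniform distribution on the interval `(a, b]`. -/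
def unif (a b : ℝ) : Measure ℝ :=
  (ENNReal.ofReal (b - a))⁻¹ • volume.restrict (Set.Ioc a b)

/-- Squared 2-Wasserstein distance as infimum over couplings. -/
def W2sqCoupling (μ ν : Measure ℝ) : ℝ :=
  sInf {c : ℝ | ∃ γ : Measure (ℝ × ℝ), IsProbabilityMeasure γ ∧
    γ.map Prod.fst = μ ∧ γ.map Prod.snd = ν ∧ c = ∫ p, (p.1 - p.2)^2 ∂γ}

open Filter
section QuantileBasic

variable (μ : Measure ℝ) [IsProbabilityMeasure μ]

lemma quantile_set_eq {t : ℝ} (ht : 0 < t) :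
    {x : ℝ | ENNReal.ofReal t ≤ μ (Set.Iic x)} = {x : ℝ | t ≤ cdf μ x} := by
  ext x
  rw [mem_setOf_eq, mem_setOf_eq, ← ofReal_cdf μ x,
    ENNReal.ofReal_le_ofReal_iff (cdf_nonneg μ x)]

lemma cdfSet_nonempty {t : ℝ} (ht : t < 1) : {x : ℝ | t ≤ cdf μ x}.Nonempty := by
  have := (tendsto_cdf_atTop μ).eventually (eventually_ge_nhds ht)
  rcases this.exists with ⟨x, hx⟩
  exact ⟨x, hx⟩

lemma cdfSet_bddBelow {t : ℝ} (ht : 0 < t) : BddBelow {x : ℝ | t ≤ cdf μ x} := by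
  have := (tendsto_cdf_atBot μ).eventually (eventually_lt_nhds ht)
  rcases this.exists with ⟨x₀, hx₀⟩
  refine ⟨x₀, fun y hy => ?_⟩
  by_contra h
  push_neg at h
  exact absurd (le_trans hy (monotone_cdf μ h.le)) (not_le.mpr hx₀)

lemma csInf_mem_cdfSet {t : ℝ} (ht : 0 < t) (ht1 : t < 1) :
    sInf {x : ℝ | t ≤ cdf μ x} ∈ {x : ℝ | t ≤ cdf μ x} := by
  set S := {x : ℝ | t ≤ cdf μ x} with hS
  have hne := cdfSet_nonempty μ ht1
  have hbd := cdfSet_bddBelow μ ht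
  set a := sInf S with ha
  have hrc : ContinuousWithinAt (cdf μ) (Ici a) a := (cdf μ).right_continuous a
  have hrc' : Tendsto (cdf μ) (nhdsWithin a (Ioi a)) (nhds (cdf μ a)) :=
    hrc.tendsto.mono_left (nhdsWithin_mono a Ioi_subset_Ici_self)
  have hev : ∀ᶠ y in nhdsWithin a (Ioi a), t ≤ cdf μ y := by
    filter_upwards [self_mem_nhdsWithin] with y hy
    obtain ⟨s, hs, hsy⟩ := exists_lt_of_csInf_lt hne hy
    exact le_trans hs (monotone_cdf μ hsy.le)
  exact ge_of_tendsto hrc' hev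

lemma quantile_le_iff {t x : ℝ} (ht : 0 < t) (ht1 : t < 1) :
    quantile μ t ≤ x ↔ t ≤ cdf μ x := by
  rw [quantile, quantile_set_eq μ ht]
  constructor
  · intro h
    exact le_trans (csInf_mem_cdfSet μ ht ht1) (monotone_cdf μ h)
  · intro h
    exact csInf_le (cdfSet_bddBelow μ ht) h

lemma lt_quantile_iff {t x : ℝ} (ht : 0 < t) (ht1 : t < 1) :
    x < quantile μ t ↔ cdf μ x < t := by
  rw [← not_le, ← not_le, quantile_le_iff μ ht ht1]

lemma monotoneOn_quantile : MonotoneOn (quantile μ) (Set.Ioo 0 1) := by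
  intro s hs t ht hst
  rw [quantile, quantile, quantile_set_eq μ hs.1, quantile_set_eq μ ht.1]
  exact csInf_le_csInf (cdfSet_bddBelow μ hs.1) (cdfSet_nonempty μ ht.2)
    (fun x hx => le_trans hst hx)

lemma aemeasurable_quantile :
    AEMeasurable (quantile μ) (volume.restrict (Set.Ioo (0:ℝ) 1)) :=
  aemeasurable_restrict_of_monotoneOn measurableSet_Ioo (monotoneOn_quantile μ)

instance : IsProbabilityMeasure (volume.restrict (Set.Ioo (0:ℝ) 1)) :=
  ⟨by simp⟩

/-- preimage computation -/
lemma quantile_preimage_Iic (x : ℝ) :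
    quantile μ ⁻¹' (Iic x) ∩ Ioo (0:ℝ) 1 = Iic (cdf μ x) ∩ Ioo (0:ℝ) 1 := by
  ext t
  simp only [mem_inter_iff, mem_preimage, mem_Iic, mem_Ioo, and_congr_left_iff]
  rintro ⟨h0, h1⟩
  rw [quantile_le_iff μ h0 h1]

lemma volume_Iic_inter_Ioo {c : ℝ} (hc0 : 0 ≤ c) (hc1 : c ≤ 1) :
    volume (Iic c ∩ Ioo (0:ℝ) 1) = ENNReal.ofReal c := by
  rcases lt_or_eq_of_le hc1 with h | h
  · have : Iic c ∩ Ioo (0:ℝ) 1 = Ioc 0 c := by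
      ext t
      simp only [mem_inter_iff, mem_Iic, mem_Ioo, mem_Ioc]
      constructor
      · rintro ⟨h1, h2, h3⟩; exact ⟨h2, h1⟩
      · rintro ⟨h1, h2⟩; exact ⟨h2, h1, lt_of_le_of_lt h2 h⟩
    rw [this, Real.volume_Ioc, sub_zero]
  · have : Iic c ∩ Ioo (0:ℝ) 1 = Ioo 0 1 := by
      subst h
      ext t
      simp only [mem_inter_iff, mem_Iic, mem_Ioo]
      exact ⟨fun h => h.2, fun h => ⟨h.2.le, h⟩⟩
    rw [this, Real.volume_Ioo, ← h, sub_zero]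

lemma map_quantile : (volume.restrict (Set.Ioo (0:ℝ) 1)).map (quantile μ) = μ := by
  have hmap : IsProbabilityMeasure ((volume.restrict (Set.Ioo (0:ℝ) 1)).map (quantile μ)) :=
    Measure.isProbabilityMeasure_map (aemeasurable_quantile μ)
  refine Measure.ext_of_Iic _ _ (fun x => ?_)
  rw [Measure.map_apply_of_aemeasurable (aemeasurable_quantile μ) measurableSet_Iic,
    Measure.restrict_apply' measurableSet_Ioo, quantile_preimage_Iic μ x,
    volume_Iic_inter_Ioo (cdf_nonneg μ x) (cdf_le_one μ x), ofReal_cdf]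

end QuantileBasic

section Indicators

/-- `hfun s x = 1` if `s < x`, else `0`. -/
def hfun (s x : ℝ) : ℝ := if s < x then 1 else 0

/-- `dfun s p = 1_{s < p.1} - 1_{s < p.2}`. -/
def dfun (s : ℝ) (p : ℝ × ℝ) : ℝ := hfun s p.1 - hfun s p.2

lemma dfun_eq_indicator (p : ℝ × ℝ) :
    (fun s => dfun s p) = fun s =>
      (Set.Ico p.2 p.1).indicator (fun _ => (1:ℝ)) s
        - (Set.Ico p.1 p.2).indicator (fun _ => (1:ℝ)) s := by
  ext s
  simp only [dfun, hfun, Set.indicator_apply, Set.mem_Ico]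
  rcases lt_or_ge s p.1 with h1 | h1 <;> rcases lt_or_ge s p.2 with h2 | h2
  · rw [if_pos h1, if_pos h2, if_neg (fun h => absurd h.1 (not_le.mpr h2)),
      if_neg (fun h => absurd h.1 (not_le.mpr h1))]
    norm_num
  · rw [if_pos h1, if_neg (not_lt.mpr h2), if_pos ⟨h2, h1⟩,
      if_neg (fun h => absurd h.1 (not_le.mpr h1))]
  · rw [if_neg (not_lt.mpr h1), if_pos h2, if_neg (fun h => absurd h.2 (not_lt.mpr h1)),
      if_pos ⟨h1, h2⟩]
  · rw [if_neg (not_lt.mpr h1), if_neg (not_lt.mpr h2),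
      if_neg (fun h => absurd h.2 (not_lt.mpr h1)), if_neg (fun h => absurd h.2 (not_lt.mpr h2))]

lemma integrable_indicator_Ico (a b : ℝ) :
    MeasureTheory.Integrable ((Set.Ico a b).indicator (fun _ => (1:ℝ))) := by
  rw [MeasureTheory.integrable_indicator_iff measurableSet_Ico]
  exact MeasureTheory.integrableOn_const
    ((by rw [Real.volume_Ico]; exact ENNReal.ofReal_lt_top) : _ < ⊤).ne

lemma integrable_dfun (p : ℝ × ℝ) :
    MeasureTheory.Integrable (fun s => dfun s p) := by
  rw [dfun_eq_indicator]
  exact (integrable_indicator_Ico _ _).sub (integrable_indicator_Ico _ _)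

lemma integral_indicator_Ico (a b : ℝ) :
    ∫ s, (Set.Ico a b).indicator (fun _ => (1:ℝ)) s = max (b - a) 0 := by
  rw [show (Set.Ico a b).indicator (fun _ => (1:ℝ)) = (Set.Ico a b).indicator 1 from rfl,
    MeasureTheory.integral_indicator_one measurableSet_Ico, measureReal_def, Real.volume_Ico,
    ENNReal.toReal_ofReal']

lemma integral_dfun (p : ℝ × ℝ) : ∫ s, dfun s p = p.1 - p.2 := by
  rw [dfun_eq_indicator,
    MeasureTheory.integral_sub (integrable_indicator_Ico _ _) (integrable_indicator_Ico _ _),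
    integral_indicator_Ico, integral_indicator_Ico]
  rcases le_total p.1 p.2 with h | h
  · rw [max_eq_right (by linarith), max_eq_left (by linarith)]; ring
  · rw [max_eq_left (by linarith), max_eq_right (by linarith)]; ring

lemma abs_dfun (s : ℝ) (p : ℝ × ℝ) :
    |dfun s p| = (Set.Ico (min p.1 p.2) (max p.1 p.2)).indicator (fun _ => (1:ℝ)) s := by
  simp only [dfun, hfun, Set.indicator_apply, Set.mem_Ico]
  rcases lt_or_ge s p.1 with h1 | h1 <;> rcases lt_or_ge s p.2 with h2 | h2
  · rw [if_pos h1, if_pos h2, if_neg (fun h => absurd h.1 (not_le.mpr (lt_min h1 h2)))]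
    norm_num
  · rw [if_pos h1, if_neg (not_lt.mpr h2),
      if_pos ⟨le_trans (min_le_right _ _) h2, lt_of_lt_of_le h1 (le_max_left _ _)⟩]
    norm_num
  · rw [if_neg (not_lt.mpr h1), if_pos h2,
      if_pos ⟨le_trans (min_le_left _ _) h1, lt_of_lt_of_le h2 (le_max_right _ _)⟩]
    norm_num
  · rw [if_neg (not_lt.mpr h1), if_neg (not_lt.mpr h2),
      if_neg (fun h => absurd h.2 (not_lt.mpr (max_le h1 h2)))]
    norm_num

lemma integral_abs_dfun (p : ℝ × ℝ) : ∫ s, |dfun s p| = |p.1 - p.2| := by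
  simp only [abs_dfun]
  rw [integral_indicator_Ico]
  rcases le_total p.1 p.2 with h | h
  · rw [min_eq_left h, max_eq_right h, abs_of_nonpos (by linarith), max_eq_left (by linarith)]; ring
  · rw [min_eq_right h, max_eq_left h, abs_of_nonneg (by linarith), max_eq_left (by linarith)]

lemma measurable_dfun : Measurable (fun z : ℝ × (ℝ × ℝ) => dfun z.1 z.2) := by
  unfold dfun hfun
  apply Measurable.sub
  · exact Measurable.ite
      (measurableSet_lt measurable_fst (measurable_fst.comp measurable_snd))
      measurable_const measurable_const
  · exact Measurable.ite
      (measurableSet_lt measurable_fst (measurable_snd.comp measurable_snd))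
      measurable_const measurable_const

end Indicators

section Core

open MeasureTheory

/-- The kernel `K γ (s,t) = ∫ dfun s p * dfun t p dγ`. -/
def Kfun (γ : Measure (ℝ × ℝ)) (q : ℝ × ℝ) : ℝ :=
  ∫ p, dfun q.1 p * dfun q.2 p ∂γ

lemma measurable_F (γ : Measure (ℝ × ℝ)) :
    AEStronglyMeasurable (fun z : (ℝ × ℝ) × (ℝ × ℝ) => dfun z.2.1 z.1 * dfun z.2.2 z.1)
      (γ.prod (volume : Measure (ℝ × ℝ))) := by
  apply Measurable.aestronglyMeasurable
  exact (measurable_dfun.comp ((measurable_fst.comp measurable_snd).prodMk measurable_fst)).mul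
    (measurable_dfun.comp ((measurable_snd.comp measurable_snd).prodMk measurable_fst))

lemma prod_integral_dfun_mul (p : ℝ × ℝ) :
    (∫ q : ℝ × ℝ, dfun q.1 p * dfun q.2 p) = (p.1 - p.2)^2 := by
  rw [Measure.volume_eq_prod]
  have : ∫ q : ℝ × ℝ, dfun q.1 p * dfun q.2 p ∂((volume : Measure ℝ).prod volume)
      = (∫ s, dfun s p) * (∫ t, dfun t p) := integral_prod_mul (fun s => dfun s p) (fun t => dfun t p)
  rw [this, integral_dfun, pow_two]

lemma prod_integral_abs_dfun_mul (p : ℝ × ℝ) :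
    (∫ q : ℝ × ℝ, ‖dfun q.1 p * dfun q.2 p‖) = (p.1 - p.2)^2 := by
  rw [Measure.volume_eq_prod]
  have : ∫ q : ℝ × ℝ, |dfun q.1 p| * |dfun q.2 p| ∂((volume : Measure ℝ).prod volume)
      = (∫ s, |dfun s p|) * (∫ t, |dfun t p|) := integral_prod_mul (fun s => |dfun s p|) (fun t => |dfun t p|)
  simp only [norm_mul, Real.norm_eq_abs]
  rw [this, integral_abs_dfun, ← abs_mul, ← pow_two, abs_sq]

lemma integrable_F (γ : Measure (ℝ × ℝ)) [IsFiniteMeasure γ]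
    (hint : Integrable (fun p => (p.1 - p.2)^2) γ) :
    Integrable (fun z : (ℝ × ℝ) × (ℝ × ℝ) => dfun z.2.1 z.1 * dfun z.2.2 z.1)
      (γ.prod (volume : Measure (ℝ × ℝ))) := by
  rw [integrable_prod_iff (measurable_F γ)]
  constructor
  · refine Filter.Eventually.of_forall (fun p => ?_)
    rw [Measure.volume_eq_prod]
    exact (integrable_dfun p).mul_prod (integrable_dfun p)
  · have heq : (fun p : ℝ × ℝ => ∫ q : ℝ × ℝ, ‖dfun q.1 p * dfun q.2 p‖)
        = fun p : ℝ × ℝ => (p.1 - p.2)^2 := by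
      ext p; exact prod_integral_abs_dfun_mul p
    rw [heq]
    exact hint

/-- Core Fubini identity. -/
lemma core_identity (γ : Measure (ℝ × ℝ)) [IsFiniteMeasure γ]
    (hint : Integrable (fun p => (p.1 - p.2)^2) γ) :
    ∫ p, (p.1 - p.2)^2 ∂γ = ∫ q : ℝ × ℝ, Kfun γ q := by
  calc ∫ p, (p.1 - p.2)^2 ∂γ
      = ∫ p, (∫ q : ℝ × ℝ, dfun q.1 p * dfun q.2 p) ∂γ := by
        congr 1; ext p; exact (prod_integral_dfun_mul p).symm
    _ = ∫ q : ℝ × ℝ, (∫ p, dfun q.1 p * dfun q.2 p ∂γ) :=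
        integral_integral_swap (integrable_F γ hint)
    _ = ∫ q : ℝ × ℝ, Kfun γ q := rfl

lemma integrable_Kfun (γ : Measure (ℝ × ℝ)) [IsFiniteMeasure γ]
    (hint : Integrable (fun p => (p.1 - p.2)^2) γ) :
    Integrable (Kfun γ) (volume : Measure (ℝ × ℝ)) :=
  (integrable_F γ hint).integral_prod_right

end Core

section Kexpand

open MeasureTheory

lemma integrable_indicator_prod (γ : Measure (ℝ × ℝ)) [IsFiniteMeasure γ]
    {S : Set (ℝ × ℝ)} (hS : MeasurableSet S) :
    Integrable (S.indicator (fun _ => (1:ℝ))) γ := by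
  rw [integrable_indicator_iff hS]
  exact integrableOn_const (measure_lt_top γ S).ne

lemma integral_indicator_prod (γ : Measure (ℝ × ℝ)) [IsFiniteMeasure γ]
    {S : Set (ℝ × ℝ)} (hS : MeasurableSet S) :
    ∫ p, S.indicator (fun _ => (1:ℝ)) p ∂γ = (γ S).toReal := by
  rw [show S.indicator (fun _ => (1:ℝ)) = S.indicator 1 from rfl, integral_indicator_one hS, measureReal_def]

lemma dfun_mul_expand (s t : ℝ) (p : ℝ × ℝ) :
    dfun s p * dfun t p =
      (Set.Ioi (max s t) ×ˢ (Set.univ : Set ℝ)).indicator (fun _ => (1:ℝ)) p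
      + ((Set.univ : Set ℝ) ×ˢ Set.Ioi (max s t)).indicator (fun _ => (1:ℝ)) p
      - (Set.Ioi s ×ˢ Set.Ioi t).indicator (fun _ => (1:ℝ)) p
      - (Set.Ioi t ×ˢ Set.Ioi s).indicator (fun _ => (1:ℝ)) p := by
  simp only [dfun, hfun, Set.indicator_apply, Set.mem_prod, Set.mem_Ioi, Set.mem_univ,
    and_true, true_and, max_lt_iff]
  by_cases h1 : s < p.1 <;> by_cases h2 : t < p.1 <;> by_cases h3 : s < p.2 <;>
    by_cases h4 : t < p.2 <;> simp [h1, h2, h3, h4]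

lemma Kfun_eq (γ : Measure (ℝ × ℝ)) [IsFiniteMeasure γ] (q : ℝ × ℝ) :
    Kfun γ q =
      (γ (Set.Ioi (max q.1 q.2) ×ˢ (Set.univ : Set ℝ))).toReal
      + (γ ((Set.univ : Set ℝ) ×ˢ Set.Ioi (max q.1 q.2))).toReal
      - (γ (Set.Ioi q.1 ×ˢ Set.Ioi q.2)).toReal
      - (γ (Set.Ioi q.2 ×ˢ Set.Ioi q.1)).toReal := by
  have hmeas1 : MeasurableSet (Set.Ioi (max q.1 q.2) ×ˢ (Set.univ : Set ℝ)) :=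
    measurableSet_Ioi.prod MeasurableSet.univ
  have hmeas2 : MeasurableSet ((Set.univ : Set ℝ) ×ˢ Set.Ioi (max q.1 q.2)) :=
    MeasurableSet.univ.prod measurableSet_Ioi
  have hmeas3 : MeasurableSet (Set.Ioi q.1 ×ˢ Set.Ioi q.2) :=
    measurableSet_Ioi.prod measurableSet_Ioi
  have hmeas4 : MeasurableSet (Set.Ioi q.2 ×ˢ Set.Ioi q.1) :=
    measurableSet_Ioi.prod measurableSet_Ioi
  have : Kfun γ q = ∫ p,
      ((Set.Ioi (max q.1 q.2) ×ˢ (Set.univ : Set ℝ)).indicator (fun _ => (1:ℝ)) p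
      + ((Set.univ : Set ℝ) ×ˢ Set.Ioi (max q.1 q.2)).indicator (fun _ => (1:ℝ)) p
      - (Set.Ioi q.1 ×ˢ Set.Ioi q.2).indicator (fun _ => (1:ℝ)) p
      - (Set.Ioi q.2 ×ˢ Set.Ioi q.1).indicator (fun _ => (1:ℝ)) p) ∂γ := by
    unfold Kfun
    congr 1
    ext p
    exact dfun_mul_expand q.1 q.2 p
  set A := (Set.Ioi (max q.1 q.2) ×ˢ (Set.univ : Set ℝ)).indicator (fun _ => (1:ℝ)) with hA
  set B := ((Set.univ : Set ℝ) ×ˢ Set.Ioi (max q.1 q.2)).indicator (fun _ => (1:ℝ)) with hB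
  set C := (Set.Ioi q.1 ×ˢ Set.Ioi q.2).indicator (fun _ => (1:ℝ)) with hC
  set D := (Set.Ioi q.2 ×ˢ Set.Ioi q.1).indicator (fun _ => (1:ℝ)) with hD
  have I1 : Integrable A γ := integrable_indicator_prod γ hmeas1
  have I2 : Integrable B γ := integrable_indicator_prod γ hmeas2
  have I3 : Integrable C γ := integrable_indicator_prod γ hmeas3
  have I4 : Integrable D γ := integrable_indicator_prod γ hmeas4
  have e3 : ∫ p, (A p + B p - C p - D p) ∂γ
      = ∫ p, (A p + B p - C p) ∂γ - ∫ p, D p ∂γ := integral_sub ((I1.add I2).sub I3) I4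
  have e2 : ∫ p, (A p + B p - C p) ∂γ
      = ∫ p, (A p + B p) ∂γ - ∫ p, C p ∂γ := integral_sub (I1.add I2) I3
  have e1 : ∫ p, (A p + B p) ∂γ
      = ∫ p, A p ∂γ + ∫ p, B p ∂γ := integral_add I1 I2
  rw [this, e3, e2, e1, hA, hB, hC, hD,
    integral_indicator_prod γ hmeas1, integral_indicator_prod γ hmeas2,
    integral_indicator_prod γ hmeas3, integral_indicator_prod γ hmeas4]

lemma marginal_fst (γ : Measure (ℝ × ℝ)) (A : Set ℝ) (hA : MeasurableSet A) :
    γ (A ×ˢ (Set.univ : Set ℝ)) = γ.map Prod.fst A := by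
  rw [Measure.map_apply measurable_fst hA, Set.prod_univ]

lemma marginal_snd (γ : Measure (ℝ × ℝ)) (B : Set ℝ) (hB : MeasurableSet B) :
    γ ((Set.univ : Set ℝ) ×ˢ B) = γ.map Prod.snd B := by
  rw [Measure.map_apply measurable_snd hB, Set.univ_prod]

lemma Kfun_le {γ γ' : Measure (ℝ × ℝ)} [IsFiniteMeasure γ] [IsFiniteMeasure γ']
    (hfst : γ.map Prod.fst = γ'.map Prod.fst) (hsnd : γ.map Prod.snd = γ'.map Prod.snd)
    (hcross : ∀ s t : ℝ, γ (Set.Ioi s ×ˢ Set.Ioi t) ≤ γ' (Set.Ioi s ×ˢ Set.Ioi t))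
    (q : ℝ × ℝ) : Kfun γ' q ≤ Kfun γ q := by
  rw [Kfun_eq, Kfun_eq]
  rw [marginal_fst γ _ measurableSet_Ioi, marginal_fst γ' _ measurableSet_Ioi,
    marginal_snd γ _ measurableSet_Ioi, marginal_snd γ' _ measurableSet_Ioi, hfst, hsnd]
  have h3 := ENNReal.toReal_le_toReal (measure_ne_top γ _) (measure_ne_top γ' _)
    |>.mpr (hcross q.1 q.2)
  have h4 := ENNReal.toReal_le_toReal (measure_ne_top γ _) (measure_ne_top γ' _)
    |>.mpr (hcross q.2 q.1)
  linarith

end Kexpand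

section Coupling

open MeasureTheory

variable (μ ν : Measure ℝ) [IsProbabilityMeasure μ] [IsProbabilityMeasure ν]

lemma measure_Ioi_eq (x : ℝ) : μ (Set.Ioi x) = ENNReal.ofReal (1 - cdf μ x) := by
  rw [← Set.compl_Iic, prob_compl_eq_one_sub measurableSet_Iic, ← ofReal_cdf μ x,
    ENNReal.ofReal_sub _ (cdf_nonneg μ x), ENNReal.ofReal_one]

/-- The comonotone (quantile) coupling. -/
def qcoupling : Measure (ℝ × ℝ) :=
  (volume.restrict (Set.Ioo (0:ℝ) 1)).map (fun u => (quantile μ u, quantile ν u))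

lemma aemeasurable_qpair :
    AEMeasurable (fun u => (quantile μ u, quantile ν u))
      (volume.restrict (Set.Ioo (0:ℝ) 1)) :=
  (aemeasurable_quantile μ).prodMk (aemeasurable_quantile ν)

instance : IsProbabilityMeasure (qcoupling μ ν) :=
  Measure.isProbabilityMeasure_map (aemeasurable_qpair μ ν)

lemma qcoupling_fst : (qcoupling μ ν).map Prod.fst = μ := by
  rw [qcoupling, AEMeasurable.map_map_of_aemeasurable measurable_fst.aemeasurable
    (aemeasurable_qpair μ ν)]
  exact map_quantile μ

lemma qcoupling_snd : (qcoupling μ ν).map Prod.snd = ν := by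
  rw [qcoupling, AEMeasurable.map_map_of_aemeasurable measurable_snd.aemeasurable
    (aemeasurable_qpair μ ν)]
  exact map_quantile ν

lemma qcoupling_cross (s t : ℝ) :
    qcoupling μ ν (Set.Ioi s ×ˢ Set.Ioi t) = min (μ (Set.Ioi s)) (ν (Set.Ioi t)) := by
  rw [qcoupling, Measure.map_apply_of_aemeasurable (aemeasurable_qpair μ ν)
    (measurableSet_Ioi.prod measurableSet_Ioi), Measure.restrict_apply' measurableSet_Ioo]
  have hset : (fun u => (quantile μ u, quantile ν u)) ⁻¹' (Set.Ioi s ×ˢ Set.Ioi t)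
      ∩ Set.Ioo (0:ℝ) 1 = Set.Ioo (max (cdf μ s) (cdf ν t)) 1 := by
    ext u
    simp only [Set.mem_inter_iff, Set.mem_preimage, Set.mem_prod, Set.mem_Ioi, Set.mem_Ioo,
      max_lt_iff]
    constructor
    · rintro ⟨⟨h1, h2⟩, hu0, hu1⟩
      exact ⟨⟨(lt_quantile_iff μ hu0 hu1).mp h1, (lt_quantile_iff ν hu0 hu1).mp h2⟩, hu1⟩
    · rintro ⟨⟨h1, h2⟩, hu1⟩
      have hu0 : 0 < u := lt_of_le_of_lt (cdf_nonneg μ s) h1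
      exact ⟨⟨(lt_quantile_iff μ hu0 hu1).mpr h1, (lt_quantile_iff ν hu0 hu1).mpr h2⟩, hu0, hu1⟩
  rw [hset, Real.volume_Ioo, measure_Ioi_eq μ s, measure_Ioi_eq ν t]
  rcases le_total (cdf μ s) (cdf ν t) with h | h
  · rw [max_eq_right h, min_eq_right (ENNReal.ofReal_le_ofReal (by linarith))]
  · rw [max_eq_left h, min_eq_left (ENNReal.ofReal_le_ofReal (by linarith))]

lemma coupling_cross_le (γ : Measure (ℝ × ℝ)) (h1 : γ.map Prod.fst = μ)
    (h2 : γ.map Prod.snd = ν) (s t : ℝ) :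
    γ (Set.Ioi s ×ˢ Set.Ioi t) ≤ min (μ (Set.Ioi s)) (ν (Set.Ioi t)) := by
  refine le_min ?_ ?_
  · rw [← h1, ← marginal_fst γ _ measurableSet_Ioi]
    exact measure_mono (Set.prod_mono subset_rfl (Set.subset_univ _))
  · rw [← h2, ← marginal_snd γ _ measurableSet_Ioi]
    exact measure_mono (Set.prod_mono (Set.subset_univ _) subset_rfl)

lemma coupling_cost_integrable (γ : Measure (ℝ × ℝ)) (h1 : γ.map Prod.fst = μ)
    (h2 : γ.map Prod.snd = ν) (hμ : Integrable (fun x => x^2) μ)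
    (hν : Integrable (fun x => x^2) ν) :
    Integrable (fun p : ℝ × ℝ => (p.1 - p.2)^2) γ := by
  have hx : Integrable (fun p : ℝ × ℝ => p.1^2) γ := by
    have h := integrable_map_measure (μ := γ) (f := Prod.fst) (g := fun x : ℝ => x^2)
      ((continuous_pow 2).aestronglyMeasurable) measurable_fst.aemeasurable
    rw [h1] at h
    exact h.mp hμ
  have hy : Integrable (fun p : ℝ × ℝ => p.2^2) γ := by
    have h := integrable_map_measure (μ := γ) (f := Prod.snd) (g := fun x : ℝ => x^2)
      ((continuous_pow 2).aestronglyMeasurable) measurable_snd.aemeasurable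
    rw [h2] at h
    exact h.mp hν
  refine Integrable.mono' ((hx.const_mul 2).add (hy.const_mul 2))
    (((continuous_fst.sub continuous_snd).pow 2).aestronglyMeasurable)
    (Filter.Eventually.of_forall fun p => ?_)
  rw [Real.norm_eq_abs, abs_of_nonneg (sq_nonneg _)]
  simp only [Pi.add_apply]
  nlinarith [sq_nonneg (p.1 + p.2), sq_nonneg (p.1 - p.2)]

lemma qcoupling_cost :
    ∫ p, (p.1 - p.2)^2 ∂(qcoupling μ ν)
      = ∫ t in Set.Ioo (0:ℝ) 1, (quantile μ t - quantile ν t)^2 := by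
  rw [qcoupling, integral_map (f := fun p : ℝ × ℝ => (p.1 - p.2)^2) (aemeasurable_qpair μ ν)
    (((continuous_fst.sub continuous_snd).pow 2).aestronglyMeasurable)]

end Coupling


/-- the coupling definition of `W₂²` equals the squared `L²(0,1)` distance
between quantile functions. -/
theorem stmt0 (μ ν : Measure ℝ) [IsProbabilityMeasure μ] [IsProbabilityMeasure ν]
    (hμ : Integrable (fun x => x^2) μ) (hν : Integrable (fun x => x^2) ν) :
    W2sqCoupling μ ν = ∫ t in Set.Ioo (0:ℝ) 1, (quantile μ t - quantile ν t)^2 := by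
  set R := ∫ t in Set.Ioo (0:ℝ) 1, (quantile μ t - quantile ν t)^2 with hR
  have hmemR : R ∈ {c : ℝ | ∃ γ : Measure (ℝ × ℝ), IsProbabilityMeasure γ ∧
      γ.map Prod.fst = μ ∧ γ.map Prod.snd = ν ∧ c = ∫ p, (p.1 - p.2)^2 ∂γ} :=
    ⟨qcoupling μ ν, inferInstance, qcoupling_fst μ ν, qcoupling_snd μ ν,
      (qcoupling_cost μ ν).symm⟩
  have hint' : Integrable (fun p : ℝ × ℝ => (p.1 - p.2)^2) (qcoupling μ ν) :=
    coupling_cost_integrable μ ν _ (qcoupling_fst μ ν) (qcoupling_snd μ ν) hμ hν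
  have hlb : ∀ c ∈ {c : ℝ | ∃ γ : Measure (ℝ × ℝ), IsProbabilityMeasure γ ∧
      γ.map Prod.fst = μ ∧ γ.map Prod.snd = ν ∧ c = ∫ p, (p.1 - p.2)^2 ∂γ}, R ≤ c := by
    rintro c ⟨γ, hγp, h1, h2, rfl⟩
    haveI := hγp
    have hint : Integrable (fun p : ℝ × ℝ => (p.1 - p.2)^2) γ :=
      coupling_cost_integrable μ ν γ h1 h2 hμ hν
    have hcross : ∀ s t : ℝ, γ (Set.Ioi s ×ˢ Set.Ioi t)
        ≤ qcoupling μ ν (Set.Ioi s ×ˢ Set.Ioi t) := fun s t => by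
      rw [qcoupling_cross]
      exact coupling_cross_le μ ν γ h1 h2 s t
    calc R = ∫ p, (p.1 - p.2)^2 ∂(qcoupling μ ν) := (qcoupling_cost μ ν).symm
      _ = ∫ q : ℝ × ℝ, Kfun (qcoupling μ ν) q := core_identity _ hint'
      _ ≤ ∫ q : ℝ × ℝ, Kfun γ q := by
          refine integral_mono (integrable_Kfun _ hint') (integrable_Kfun _ hint) (fun q => ?_)
          exact Kfun_le (h1.trans (qcoupling_fst μ ν).symm) (h2.trans (qcoupling_snd μ ν).symm)
            hcross q
      _ = ∫ p, (p.1 - p.2)^2 ∂γ := (core_identity γ hint).symm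
  rw [W2sqCoupling]
  exact le_antisymm (csInf_le ⟨R, fun c hc => hlb c hc⟩ hmemR) (le_csInf ⟨R, hmemR⟩ hlb)
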